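/- Let G be a finite group, Γ = Pow(G), and let v ∈ G be a CC-generator whose order o(v) is not a prime power. Then Γ_v = Γ[N_Γ[v]] has at most two closed-twin-classes of size greater than or equal to φ(o(v)). -/

import Mathlib

/-- The power graph of a group `G`: distinct `x` and `y` are adjacent iff
`x ∈ ⟨y⟩` or `y ∈ ⟨x⟩`. -/
def powGraph (G : Type*) [Group G] : SimpleGraph G where
  Adj x y := x ≠ y ∧ (x ∈ Subgroup.zpowers y ∨ y ∈ Subgroup.zpowers x)
  symm := by
    constructor
    rintro x y ⟨hne, h⟩
    exact ⟨hne.symm, h.symm⟩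
  loopless := by
    constructor
    rintro x ⟨hne, -⟩
    exact hne rfl

/-- The closed neighborhood of a vertex in a simple graph. -/
def closedNbhd {V : Type*} (X : SimpleGraph V) (v : V) : Set V :=
  insert v (X.neighborSet v)

theorem self_mem_closedNbhd {V : Type*} (X : SimpleGraph V) (v : V) :
    v ∈ closedNbhd X v := Set.mem_insert v _

/-- `Γ_v`: the subgraph of the power graph induced on the closed neighborhood of `v`. -/
def powLocal (G : Type*) [Group G] (v : G) :
    SimpleGraph (closedNbhd (powGraph G) v) :=
  SimpleGraph.induce (closedNbhd (powGraph G) v) (powGraph G)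

/-- `v` is a CC-generator: `⟨v⟩` is not properly contained in any cyclic subgroup,
i.e. `v ∈ ⟨g⟩` implies `⟨g⟩ = ⟨v⟩`. -/
def IsCCGenerator {G : Type*} [Group G] (v : G) : Prop :=
  ∀ g : G, v ∈ Subgroup.zpowers g → Subgroup.zpowers g = Subgroup.zpowers v


open Subgroup


private lemma two_primes_of_not_prime_pow {n : ℕ} (hn0 : n ≠ 0)
    (hnpp : ¬ ∃ p i : ℕ, p.Prime ∧ n = p ^ i) :
    ∃ p q : ℕ, p.Prime ∧ q.Prime ∧ p ≠ q ∧ p ∣ n ∧ q ∣ n := by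
  have hn1 : n ≠ 1 := by rintro rfl; exact hnpp ⟨2, 0, Nat.prime_two, rfl⟩
  obtain ⟨p, hp, hpn⟩ := Nat.exists_prime_and_dvd hn1
  by_contra h
  push_neg at h
  refine hnpp ⟨p, n.primeFactorsList.length, hp, ?_⟩
  refine Nat.eq_prime_pow_of_unique_prime_dvd hn0 (fun {d} hd hdn => ?_)
  by_contra hdp
  exact (h p d hp hd (fun hh => hdp hh.symm) hpn) hdn

private lemma exists_incomparable {n d : ℕ} (hn0 : n ≠ 0)
    (htwo : ∃ p q : ℕ, p.Prime ∧ q.Prime ∧ p ≠ q ∧ p ∣ n ∧ q ∣ n)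
    (hdn : d ∣ n) (hd1 : 1 < d) (hdlt : d < n) :
    ∃ m, m ∣ n ∧ ¬ m ∣ d ∧ ¬ d ∣ m := by
  by_cases hall : ∀ q : ℕ, q.Prime → q ∣ n → q ∣ d
  · have hd0 : d ≠ 0 := by omega
    have hnd : ¬ n ∣ d := fun h => absurd (Nat.le_of_dvd (by omega) h) (by omega)
    rw [← Nat.factorization_le_iff_dvd hn0 hd0] at hnd
    rw [Finsupp.le_def] at hnd
    push_neg at hnd
    obtain ⟨q, hq⟩ := hnd
    have hqp : q.Prime := by
      have : q ∈ n.factorization.support := by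
        rw [Finsupp.mem_support_iff]; omega
      rw [Nat.support_factorization] at this
      exact Nat.prime_of_mem_primeFactors this
    refine ⟨q ^ n.factorization q, Nat.ordProj_dvd n q, ?_, ?_⟩
    · rw [Nat.Prime.pow_dvd_iff_le_factorization hqp hd0]; omega
    · intro hdm
      obtain ⟨p₁, p₂, hp₁, hp₂, hne, hd₁, hd₂⟩ := htwo
      have key : ∀ r : ℕ, r.Prime → r ∣ n → r = q := by
        intro r hr hrn
        have hrq : r ∣ q ^ n.factorization q := (hall r hr hrn).trans hdm
        exact (Nat.prime_dvd_prime_iff_eq hr hqp).mp (hr.dvd_of_dvd_pow hrq)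
      exact hne ((key p₁ hp₁ hd₁).trans (key p₂ hp₂ hd₂).symm)
  · push_neg at hall
    obtain ⟨q, hq, hqn, hqd⟩ := hall
    refine ⟨q, hqn, hqd, fun hdq => ?_⟩
    rcases (Nat.Prime.eq_one_or_self_of_dvd hq d hdq) with h | h
    · omega
    · exact hqd (h ▸ dvd_rfl)

private lemma eq_of_R_core {n d e : ℕ} (hn0 : n ≠ 0)
    (htwo : ∃ p q : ℕ, p.Prime ∧ q.Prime ∧ p ≠ q ∧ p ∣ n ∧ q ∣ n)
    (hde : d ∣ e) (hen : e ∣ n) (hd1 : 1 < d) (helt : e < n)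
    (H : ∀ m, m ∣ n → ((m ∣ d ∨ d ∣ m) ↔ (m ∣ e ∨ e ∣ m))) : d = e := by
  by_contra hne
  have he0 : e ≠ 0 := by
    rintro rfl
    exact hn0 (Nat.eq_zero_of_zero_dvd hen)
  have hd0 : d ≠ 0 := by omega
  have hdn : d ∣ n := hde.trans hen
  -- Step A: find prime q with e.factorization q < n.factorization q
  have hnne : ¬ n ∣ e := fun h => absurd (Nat.le_of_dvd (by omega) h) (by omega)
  rw [← Nat.factorization_le_iff_dvd hn0 he0, Finsupp.le_def] at hnne
  push_neg at hnne
  obtain ⟨q, hq⟩ := hnne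
  have hqp : q.Prime := by
    have : q ∈ n.factorization.support := by rw [Finsupp.mem_support_iff]; omega
    rw [Nat.support_factorization] at this
    exact Nat.prime_of_mem_primeFactors this
  set α := e.factorization q with hα
  -- the element m = lcm d (q^(α+1))
  have hq0 : q ^ (α + 1) ≠ 0 := pow_ne_zero _ hqp.pos.ne'
  have hm0 : Nat.lcm d (q ^ (α + 1)) ≠ 0 := Nat.lcm_ne_zero hd0 hq0
  have hmn : Nat.lcm d (q ^ (α + 1)) ∣ n := by
    refine Nat.lcm_dvd hdn ?_
    rw [Nat.Prime.pow_dvd_iff_le_factorization hqp hn0]; omega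
  have hcomp := (H _ hmn).mp (Or.inr (Nat.dvd_lcm_left _ _))
  have hme : ¬ Nat.lcm d (q ^ (α + 1)) ∣ e := by
    intro h
    have : q ^ (α + 1) ∣ e := (Nat.dvd_lcm_right _ _).trans h
    rw [Nat.Prime.pow_dvd_iff_le_factorization hqp he0] at this; omega
  have hem : e ∣ Nat.lcm d (q ^ (α + 1)) := hcomp.resolve_left hme
  -- valuation consequences
  have hfac_m : (Nat.lcm d (q ^ (α + 1))).factorization
      = d.factorization ⊔ (q ^ (α + 1)).factorization := Nat.factorization_lcm hd0 hq0
  have hle_m : e.factorization ≤ (Nat.lcm d (q ^ (α + 1))).factorization := by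
    rw [← Nat.factorization_le_iff_dvd he0 hm0] at hem; exact hem
  have hpow_fac : ∀ p : ℕ, p ≠ q → (q ^ (α + 1)).factorization p = 0 := by
    intro p hpq
    rw [hqp.factorization_pow, Finsupp.single_apply, if_neg (by omega : ¬ q = p)]
  have hEP : ∀ p : ℕ, p ≠ q → e.factorization p ≤ d.factorization p := by
    intro p hpq
    have h' := hle_m p
    rw [hfac_m, Finsupp.sup_apply, hpow_fac p hpq] at h'
    simpa using h'
  have hDE : d.factorization ≤ e.factorization := by
    rw [Nat.factorization_le_iff_dvd hd0 he0]; exact hde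
  have hdq_lt : d.factorization q < e.factorization q := by
    rcases lt_or_ge (d.factorization q) (e.factorization q) with h | h
    · exact h
    · exfalso
      apply hne
      apply Nat.dvd_antisymm hde
      rw [← Nat.factorization_le_iff_dvd he0 hd0, Finsupp.le_def]
      intro p
      by_cases hpq : p = q
      · subst hpq; omega
      · exact hEP p hpq
  -- Step B: every prime of d is q
  have hrq : ∀ r : ℕ, r.Prime → r ∣ d → r = q := by
    intro r hr hrd
    by_contra hrneq
    have hmc_dvd_e : ((e / r ^ e.factorization r)) ∣ e := Nat.ordCompl_dvd e r
    have hmc_n : ((e / r ^ e.factorization r)) ∣ n := hmc_dvd_e.trans hen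
    have hc := (H _ hmc_n).mpr (Or.inl hmc_dvd_e)
    have hmc0 : ((e / r ^ e.factorization r)) ≠ 0 := (Nat.ordCompl_pos r he0).ne'
    rcases hc with hc | hc
    · -- (e / r ^ e.factorization r) ∣ d : contradiction at q
      rw [← Nat.factorization_le_iff_dvd hmc0 hd0] at hc
      have := hc q
      rw [Nat.factorization_ordCompl e r, Finsupp.erase_ne (by omega : q ≠ r)] at this
      omega
    · -- d ∣ (e / r ^ e.factorization r) : contradiction since r ∣ d
      exact Nat.not_dvd_ordCompl hr he0 (hrd.trans hc)
  -- e's primes are also only q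
  have hre : ∀ r : ℕ, r.Prime → r ≠ q → ¬ r ∣ e := by
    intro r hr hrneq hrdvd
    have h1 : 1 ≤ e.factorization r := by
      rw [← Nat.Prime.pow_dvd_iff_le_factorization hr he0, pow_one]; exact hrdvd
    have h2 : 1 ≤ d.factorization r := le_trans h1 (hEP r hrneq)
    have : r ∣ d := by
      rw [← pow_one r]
      rw [Nat.Prime.pow_dvd_iff_le_factorization hr hd0]; exact h2
    exact hrneq (hrq r hr this)
  -- Step C
  obtain ⟨p₁, p₂, hp₁, hp₂, hpne, hd₁, hd₂⟩ := htwo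
  have hr_ex : ∃ r : ℕ, r.Prime ∧ r ∣ n ∧ r ≠ q := by
    by_cases h1 : p₁ = q
    · exact ⟨p₂, hp₂, hd₂, by omega⟩
    · exact ⟨p₁, hp₁, hd₁, h1⟩
  obtain ⟨r, hr, hrn, hrneq⟩ := hr_ex
  have hrd : ¬ r ∣ d := fun h => hrneq (hrq r hr h)
  have hcop : Nat.Coprime d r := (Nat.coprime_comm.mp ((Nat.Prime.coprime_iff_not_dvd hr).mpr hrd))
  have hm3n : d * r ∣ n := Nat.Coprime.mul_dvd_of_dvd_of_dvd hcop hdn hrn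
  have hc3 := (H _ hm3n).mp (Or.inr (Dvd.intro r rfl))
  have hm30 : d * r ≠ 0 := Nat.mul_ne_zero hd0 hr.pos.ne'
  rcases hc3 with hc | hc
  · -- d * r ∣ e → r ∣ e, contradiction
    exact hre r hr hrneq ((Dvd.intro_left d rfl).trans hc)
  · -- e ∣ d * r : contradiction at q
    rw [← Nat.factorization_le_iff_dvd he0 hm30] at hc
    have := hc q
    rw [Nat.factorization_mul hd0 hr.pos.ne'] at this
    have hrq0 : r.factorization q = 0 := by
      rw [hr.factorization, Finsupp.single_apply, if_neg (by omega : ¬ r = q)]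
    simp only [Finsupp.add_apply, hrq0, add_zero] at this
    omega

private lemma eq_of_R {n d e : ℕ} (hn0 : n ≠ 0)
    (htwo : ∃ p q : ℕ, p.Prime ∧ q.Prime ∧ p ≠ q ∧ p ∣ n ∧ q ∣ n)
    (hdn : d ∣ n) (hen : e ∣ n) (hd1 : 1 < d) (hdlt : d < n)
    (he1 : 1 < e) (helt : e < n)
    (H : ∀ m, m ∣ n → ((m ∣ d ∨ d ∣ m) ↔ (m ∣ e ∨ e ∣ m))) : d = e := by
  have hcomp : d ∣ e ∨ e ∣ d := by
    have := (H e hen).mpr (Or.inl dvd_rfl)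
    tauto
  rcases hcomp with h | h
  · exact eq_of_R_core hn0 htwo h hen hd1 helt H
  · exact (eq_of_R_core hn0 htwo h hdn he1 hdlt (fun m hm => (H m hm).symm)).symm

private lemma eq_two_mul_of_totient_le {n d : ℕ} (hn0 : n ≠ 0) (hdn : d ∣ n) (hlt : d < n)
    (h : n.totient ≤ d.totient) : n = 2 * d := by
  have hd0 : d ≠ 0 := by rintro rfl; exact absurd (Nat.eq_zero_of_zero_dvd hdn) hn0
  have heq : d.totient = n.totient :=
    le_antisymm (Nat.le_of_dvd (Nat.totient_pos.mpr (by omega)) (Nat.totient_dvd_of_dvd hdn)) h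
  obtain ⟨k, hk⟩ := hdn
  have hk2 : 2 ≤ k := by
    rcases Nat.lt_or_ge k 2 with h2 | h2
    · interval_cases k <;> omega
    · exact h2
  have hkey := Nat.totient_gcd_mul_totient_mul d k
  rw [← hk, ← heq] at hkey
  -- hkey : φ (gcd d k) * φ d = φ d * φ k * gcd d k
  have hφd : 0 < d.totient := Nat.totient_pos.mpr (by omega)
  have hg0 : 0 < Nat.gcd d k := Nat.gcd_pos_of_pos_left k (by omega)
  have hφg_le : (Nat.gcd d k).totient ≤ Nat.gcd d k := Nat.totient_le _
  have hφk : 0 < k.totient := Nat.totient_pos.mpr (by omega)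
  have hcancel : (Nat.gcd d k).totient = k.totient * Nat.gcd d k := by
    have : (Nat.gcd d k).totient * d.totient = (k.totient * Nat.gcd d k) * d.totient := by
      rw [hkey]; ring
    exact Nat.eq_of_mul_eq_mul_right hφd this
  have hk1 : k.totient = 1 := by nlinarith [hcancel, hφg_le, hg0, hφk]
  rcases Nat.totient_eq_one_iff.mp hk1 with rfl | rfl
  · omega
  · omega

section GroupAux


variable {G : Type*} [Group G] [Finite G]

private lemma powGraph_adj {x y : G} :
    (powGraph G).Adj x y ↔ (x ≠ y ∧ (x ∈ zpowers y ∨ y ∈ zpowers x)) := Iff.rfl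

private lemma mem_zpowers_of_orderOf_dvd {v a b : G} (ha : a ∈ zpowers v)
    (hb : b ∈ zpowers v) (h : orderOf a ∣ orderOf b) : a ∈ zpowers b := by
  obtain ⟨i, rfl⟩ := Submonoid.mem_powers_iff a v |>.mp
    ((isOfFinOrder_of_finite v).mem_powers_iff_mem_zpowers.mpr ha)
  obtain ⟨j, rfl⟩ := Submonoid.mem_powers_iff b v |>.mp
    ((isOfFinOrder_of_finite v).mem_powers_iff_mem_zpowers.mpr hb)
  have hn0 : orderOf v ≠ 0 := (orderOf_pos v).ne'
  rw [orderOf_pow v, orderOf_pow v] at h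
  have hgi : Nat.gcd (orderOf v) i ∣ orderOf v := Nat.gcd_dvd_left _ i
  have hgj : Nat.gcd (orderOf v) j ∣ orderOf v := Nat.gcd_dvd_left _ j
  have hgcd : Nat.gcd (orderOf v) j ∣ Nat.gcd (orderOf v) i := by
    obtain ⟨k, hk⟩ := h
    have e1 : orderOf v = orderOf v / Nat.gcd (orderOf v) j * Nat.gcd (orderOf v) j :=
      (Nat.div_mul_cancel hgj).symm
    have e2 : orderOf v = orderOf v / Nat.gcd (orderOf v) i * Nat.gcd (orderOf v) i :=
      (Nat.div_mul_cancel hgi).symm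
    have hpos : 0 < orderOf v / Nat.gcd (orderOf v) i :=
      Nat.div_pos (Nat.le_of_dvd (by omega) hgi) (Nat.pos_of_dvd_of_pos hgi (by omega))
    have heq : orderOf v / Nat.gcd (orderOf v) i * Nat.gcd (orderOf v) i
        = orderOf v / Nat.gcd (orderOf v) i * (Nat.gcd (orderOf v) j * k) := by
      rw [← e2]
      calc orderOf v = orderOf v / Nat.gcd (orderOf v) j * Nat.gcd (orderOf v) j := e1
        _ = orderOf v / Nat.gcd (orderOf v) i * k * Nat.gcd (orderOf v) j := by rw [hk]
        _ = orderOf v / Nat.gcd (orderOf v) i * (Nat.gcd (orderOf v) j * k) := by ring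
    exact ⟨k, Nat.eq_of_mul_eq_mul_left hpos heq⟩
  have hji : Nat.gcd (orderOf v) j ∣ i := hgcd.trans (Nat.gcd_dvd_right _ i)
  have h1 : (v : G) ^ ((orderOf v : ℤ) * Nat.gcdA (orderOf v) j) = 1 := by
    rw [zpow_mul, zpow_natCast, pow_orderOf_eq_one, one_zpow]
  have hb2 : (v : G) ^ ((Nat.gcd (orderOf v) j : ℤ)) ∈ zpowers (v ^ j) := by
    rw [Nat.gcd_eq_gcd_ab, zpow_add, h1, one_mul, zpow_mul, zpow_natCast]
    exact zpow_mem (mem_zpowers _) _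
  have key : v ^ Nat.gcd (orderOf v) j ∈ zpowers (v ^ j) := by
    rw [← zpow_natCast v (Nat.gcd (orderOf v) j)]
    exact hb2
  obtain ⟨t, ht⟩ := hji
  rw [ht, pow_mul]
  exact pow_mem key t

private lemma closedNbhd_eq {v : G} (hcc : IsCCGenerator v) :
    closedNbhd (powGraph G) v = (zpowers v : Set G) := by
  ext x
  simp only [closedNbhd, Set.mem_insert_iff, SimpleGraph.mem_neighborSet, SetLike.mem_coe]
  constructor
  · rintro (rfl | hadj)
    · exact mem_zpowers _
    · rcases (powGraph_adj.mp hadj) with ⟨hne, h | h⟩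
      · rw [← hcc x h]; exact mem_zpowers x
      · exact h
  · intro hx
    by_cases hxv : x = v
    · exact Or.inl hxv
    · exact Or.inr (powGraph_adj.mpr ⟨fun h => hxv h.symm, Or.inr hx⟩)

private lemma nbhd_char {v : G} (hcc : IsCCGenerator v) (a : closedNbhd (powGraph G) v) :
    closedNbhd (powLocal G v) a
      = {b : closedNbhd (powGraph G) v |
          orderOf (b : G) ∣ orderOf (a : G) ∨ orderOf (a : G) ∣ orderOf (b : G)} := by
  have hmem : ∀ c : closedNbhd (powGraph G) v, (c : G) ∈ zpowers v := by
    intro c; exact (Set.ext_iff.mp (closedNbhd_eq hcc) _).mp c.2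
  ext b
  simp only [closedNbhd, Set.mem_insert_iff, SimpleGraph.mem_neighborSet, Set.mem_setOf_eq]
  constructor
  · rintro (rfl | hadj)
    · exact Or.inl dvd_rfl
    · have hadj2 : (powGraph G).Adj ↑a ↑b := hadj
      rcases powGraph_adj.mp hadj2 with ⟨hne, h | h⟩
      · exact Or.inr (orderOf_dvd_of_mem_zpowers h)
      · exact Or.inl (orderOf_dvd_of_mem_zpowers h)
  · intro h
    by_cases hba : b = a
    · exact Or.inl hba
    · refine Or.inr ?_
      show (powGraph G).Adj ↑a ↑b
      refine powGraph_adj.mpr ⟨fun he => hba (Subtype.ext he).symm, ?_⟩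
      rcases h with h | h
      · exact Or.inr (mem_zpowers_of_orderOf_dvd (hmem b) (hmem a) h)
      · exact Or.inl (mem_zpowers_of_orderOf_dvd (hmem a) (hmem b) h)

private lemma exists_orderOf_eq {v : G} (hcc : IsCCGenerator v) {m : ℕ}
    (hm : m ∣ orderOf v) :
    ∃ c : closedNbhd (powGraph G) v, orderOf (c : G) = m := by
  have hn0 : orderOf v ≠ 0 := (orderOf_pos v).ne'
  refine ⟨⟨v ^ (orderOf v / m), ?_⟩, ?_⟩
  · rw [closedNbhd_eq hcc]
    exact pow_mem (mem_zpowers v) _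
  · show orderOf (v ^ (orderOf v / m)) = m
    rw [orderOf_pow v, Nat.gcd_eq_right (Nat.div_dvd_of_dvd hm), Nat.div_div_self hm hn0]

private lemma ncard_orderOf_eq {v : G} (hcc : IsCCGenerator v) {d : ℕ}
    (hd : d ∣ orderOf v) :
    {w : closedNbhd (powGraph G) v | orderOf (w : G) = d}.ncard = d.totient := by
  classical
  haveI : Fintype (zpowers v) := Fintype.ofFinite _
  haveI : IsCyclic (zpowers v) := by
    constructor
    refine ⟨⟨v, mem_zpowers v⟩, fun x => ?_⟩
    obtain ⟨k, hk⟩ := mem_zpowers_iff.mp x.2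
    exact ⟨k, Subtype.ext (by simpa using hk)⟩
  have hcard : Fintype.card (zpowers v) = orderOf v := by
    rw [← Nat.card_eq_fintype_card, Nat.card_zpowers]
  have hd' : d ∣ Fintype.card (zpowers v) := by rw [hcard]; exact hd
  have htot := IsCyclic.card_orderOf_eq_totient (α := zpowers v) hd'
  have hbij : Nat.card {w : closedNbhd (powGraph G) v // orderOf (w : G) = d}
      = Nat.card {a : zpowers v // orderOf a = d} := by
    apply Nat.card_congr
    refine ⟨fun w => ⟨⟨(w : G), (Set.ext_iff.mp (closedNbhd_eq hcc) _).mp w.1.2⟩,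
        by rw [Subgroup.orderOf_mk]; exact w.2⟩,
      fun a => ⟨⟨(a : G), (Set.ext_iff.mp (closedNbhd_eq hcc) _).mpr a.1.2⟩,
        by show orderOf ((a.1 : zpowers v) : G) = d
           rw [Subgroup.orderOf_coe]; exact a.2⟩,
      fun w => by ext; rfl, fun a => by ext; rfl⟩
  rw [← Nat.card_coe_set_eq]
  rw [show (↥{w : closedNbhd (powGraph G) v | orderOf (w : G) = d})
      = {w : closedNbhd (powGraph G) v // orderOf (w : G) = d} from rfl]
  rw [hbij, Nat.card_eq_fintype_card, Fintype.card_subtype]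
  exact htot

end GroupAux

/-- For a CC-generator `v` whose order is not a prime power, `Γ_v` has at most two
closed-twin-classes of size at least `φ(o(v))`. -/
theorem at_most_two_large_twin_classes
    {G : Type*} [Group G] [Finite G] (v : G)
    (hcc : IsCCGenerator v)
    (hnpp : ¬ ∃ p i : ℕ, p.Prime ∧ orderOf v = p ^ i) :
    {S : Set (closedNbhd (powGraph G) v) |
        (∃ u : closedNbhd (powGraph G) v,
          S = {w : closedNbhd (powGraph G) v |
            closedNbhd (powLocal G v) w = closedNbhd (powLocal G v) u}) ∧
        Nat.totient (orderOf v) ≤ S.ncard}.ncard ≤ 2 := by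
  classical
  have hn0 : orderOf v ≠ 0 := (orderOf_pos v).ne'
  have htwo := two_primes_of_not_prime_pow hn0 hnpp
  have hdvd : ∀ c : closedNbhd (powGraph G) v, orderOf (c : G) ∣ orderOf v := fun c =>
    orderOf_dvd_of_mem_zpowers ((Set.ext_iff.mp (closedNbhd_eq hcc) _).mp c.2)
  let vA : closedNbhd (powGraph G) v := ⟨v, self_mem_closedNbhd _ v⟩
  have hB2 : (v ^ 2 : G) ∈ closedNbhd (powGraph G) v :=
    (Set.ext_iff.mp (closedNbhd_eq hcc) _).mpr (pow_mem (mem_zpowers v) 2)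
  let B : closedNbhd (powGraph G) v := ⟨v ^ 2, hB2⟩
  have hsub : {S : Set (closedNbhd (powGraph G) v) |
        (∃ u : closedNbhd (powGraph G) v,
          S = {w : closedNbhd (powGraph G) v |
            closedNbhd (powLocal G v) w = closedNbhd (powLocal G v) u}) ∧
        Nat.totient (orderOf v) ≤ S.ncard}
      ⊆ {{w : closedNbhd (powGraph G) v |
            closedNbhd (powLocal G v) w = closedNbhd (powLocal G v) vA},
         {w : closedNbhd (powGraph G) v |
            closedNbhd (powLocal G v) w = closedNbhd (powLocal G v) B}} := by
    rintro S ⟨⟨u, rfl⟩, hcard⟩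
    have hdn : orderOf (u : G) ∣ orderOf v := hdvd u
    by_cases hdtop : orderOf (u : G) = 1 ∨ orderOf (u : G) = orderOf v
    · left
      have hNu : closedNbhd (powLocal G v) u = closedNbhd (powLocal G v) vA := by
        rw [nbhd_char hcc u, nbhd_char hcc vA]
        ext b
        simp only [Set.mem_setOf_eq]
        have hb := hdvd b
        have hvAo : orderOf (vA : G) = orderOf v := rfl
        constructor
        · intro _; exact Or.inl (hvAo ▸ hb)
        · intro _
          rcases hdtop with h1 | hN
          · exact Or.inr (h1 ▸ one_dvd _)
          · exact Or.inl (hN ▸ hb)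
      exact Set.ext fun w => by rw [Set.mem_setOf_eq, Set.mem_setOf_eq, hNu]
    · push_neg at hdtop
      obtain ⟨hd1', hdn'⟩ := hdtop
      have hdz : orderOf (u : G) ≠ 0 := fun h0 => hn0 (Nat.eq_zero_of_zero_dvd (h0 ▸ hdn))
      have hd1 : 1 < orderOf (u : G) := by omega
      have hdlt : orderOf (u : G) < orderOf v :=
        lt_of_le_of_ne (Nat.le_of_dvd (by omega) hdn) hdn'
      -- the class is contained in elements of the same order
      have hS : {w : closedNbhd (powGraph G) v |
            closedNbhd (powLocal G v) w = closedNbhd (powLocal G v) u}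
          ⊆ {w : closedNbhd (powGraph G) v | orderOf (w : G) = orderOf (u : G)} := by
        intro w hw
        rw [Set.mem_setOf_eq] at hw
        have hen : orderOf (w : G) ∣ orderOf v := hdvd w
        by_cases hetop : orderOf (w : G) = 1 ∨ orderOf (w : G) = orderOf v
        · exfalso
          obtain ⟨m, hmn, hmd, hdm⟩ := exists_incomparable hn0 htwo hdn hd1 hdlt
          obtain ⟨c, hc⟩ := exists_orderOf_eq hcc hmn
          have hcmem : c ∈ closedNbhd (powLocal G v) w := by
            rw [nbhd_char hcc w]
            rcases hetop with h1 | hN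
            · exact Or.inr (h1 ▸ one_dvd _)
            · exact Or.inl (by rw [hN, hc]; exact hmn)
          rw [hw, nbhd_char hcc u, Set.mem_setOf_eq, hc] at hcmem
          tauto
        · push_neg at hetop
          obtain ⟨he1', hen'⟩ := hetop
          have hez : orderOf (w : G) ≠ 0 := fun h0 => hn0 (Nat.eq_zero_of_zero_dvd (h0 ▸ hen))
          have he1 : 1 < orderOf (w : G) := by omega
          have helt : orderOf (w : G) < orderOf v :=
            lt_of_le_of_ne (Nat.le_of_dvd (by omega) hen) hen'
          have H : ∀ m, m ∣ orderOf v →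
              ((m ∣ orderOf (u : G) ∨ orderOf (u : G) ∣ m)
                ↔ (m ∣ orderOf (w : G) ∨ orderOf (w : G) ∣ m)) := by
            intro m hmn
            obtain ⟨c, hc⟩ := exists_orderOf_eq hcc hmn
            have h1 : c ∈ closedNbhd (powLocal G v) u
                ↔ (m ∣ orderOf (u : G) ∨ orderOf (u : G) ∣ m) := by
              rw [nbhd_char hcc u, Set.mem_setOf_eq, hc]
            have h2 : c ∈ closedNbhd (powLocal G v) w
                ↔ (m ∣ orderOf (w : G) ∨ orderOf (w : G) ∣ m) := by
              rw [nbhd_char hcc w, Set.mem_setOf_eq, hc]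
            rw [← h1, ← h2, hw]
          exact (eq_of_R hn0 htwo hdn hen hd1 hdlt he1 helt H).symm
      have hcard2 : (orderOf v).totient ≤ (orderOf (u : G)).totient := by
        have hle := Set.ncard_le_ncard hS (Set.toFinite _)
        rw [ncard_orderOf_eq hcc hdn] at hle
        exact le_trans hcard hle
      have hn2d : orderOf v = 2 * orderOf (u : G) :=
        eq_two_mul_of_totient_le hn0 hdn hdlt hcard2
      right
      have hBord : orderOf (B : G) = orderOf (u : G) := by
        show orderOf (v ^ 2) = orderOf (u : G)
        rw [orderOf_pow v, Nat.gcd_eq_right ⟨orderOf (u : G), hn2d⟩, hn2d,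
          Nat.mul_div_cancel_left _ (by norm_num)]
      have hNu : closedNbhd (powLocal G v) u = closedNbhd (powLocal G v) B := by
        rw [nbhd_char hcc u, nbhd_char hcc B, hBord]
      exact Set.ext fun w => by rw [Set.mem_setOf_eq, Set.mem_setOf_eq, hNu]
  calc {S : Set (closedNbhd (powGraph G) v) |
        (∃ u : closedNbhd (powGraph G) v,
          S = {w : closedNbhd (powGraph G) v |
            closedNbhd (powLocal G v) w = closedNbhd (powLocal G v) u}) ∧
        Nat.totient (orderOf v) ≤ S.ncard}.ncard
      ≤ ({{w : closedNbhd (powGraph G) v |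
            closedNbhd (powLocal G v) w = closedNbhd (powLocal G v) vA},
          {w : closedNbhd (powGraph G) v |
            closedNbhd (powLocal G v) w = closedNbhd (powLocal G v) B}} :
            Set (Set (closedNbhd (powGraph G) v))).ncard :=
        Set.ncard_le_ncard hsub (Set.toFinite _)
    _ ≤ 2 := le_trans (Set.ncard_insert_le _ _) (by simp)
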